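/- Proposition (no sparse penalty models): Let Q(x) = a + Σ_j b_j x_j + Σ_{j<k} c_{jk} x_j x_k on n variables with Q(x) = 0 for all bitstrings of Hamming weight r (1 ≤ r ≤ n-1), Q(x) ≥ 0 for all bitstrings, and c_{uv} = 0 for some pair u < v with n ≥ r+1 large enough that a subset S of size r-1 avoiding u and v exists (i.e. n ≥ r+1). Then there exists a bitstring x of Hamming weight r-1 or r+1 with Q(x) = 0. -/

import Mathlib

theorem qubo_no_sparse_penalty (n r : ℕ) (hr : 1 ≤ r) (hn : r + 1 ≤ n)
    (a : ℝ) (b : Fin n → ℝ) (c : Fin n → Fin n → ℝ)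
    (hsym : ∀ j k, c j k = c k j) (hdiag : ∀ j, c j j = 0)
    (Q : (Fin n → ℝ) → ℝ)
    (hQ : ∀ x, Q x = a + (∑ j, b j * x j) +
      ∑ j, ∑ k, if j < k then c j k * x j * x k else 0)
    (hzero : ∀ x : Fin n → ℝ, (∀ j, x j = 0 ∨ x j = 1) →
      (∑ j, x j) = (r : ℝ) → Q x = 0)
    (hnonneg : ∀ x : Fin n → ℝ, (∀ j, x j = 0 ∨ x j = 1) → 0 ≤ Q x)
    (u v : Fin n) (huv : u < v) (hc : c u v = 0) :
    ∃ x : Fin n → ℝ, (∀ j, x j = 0 ∨ x j = 1) ∧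
      ((∑ j, x j) = ((r : ℝ) - 1) ∨ (∑ j, x j) = ((r : ℝ) + 1)) ∧ Q x = 0 := by
  have huvne : u ≠ v := ne_of_lt huv
  -- pick S ⊆ univ \ {u,v} with card r-1
  obtain ⟨S, hSsub, hScard⟩ : ∃ S ⊆ (Finset.univ \ {u, v} : Finset (Fin n)),
      S.card = r - 1 := by
    apply Finset.exists_subset_card_eq
    have h2 : ({u, v} : Finset (Fin n)).card = 2 := by
      rw [Finset.card_insert_of_notMem (by simp [huvne]), Finset.card_singleton]
    rw [Finset.card_sdiff_of_subset (by simp), h2, Finset.card_univ, Fintype.card_fin]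
    omega
  have huS : u ∉ S := fun h => by simpa using hSsub h
  have hvS : v ∉ S := fun h => by simpa using hSsub h
  set e : Fin n → Fin n → ℝ := fun w j => if j = w then 1 else 0 with he
  set y0 : Fin n → ℝ := fun j => if j ∈ S then 1 else 0 with hy0
  set yu : Fin n → ℝ := fun j => y0 j + e u j with hyu
  set yv : Fin n → ℝ := fun j => y0 j + e v j with hyv
  set yuv : Fin n → ℝ := fun j => y0 j + e u j + e v j with hyuv
  have hy0val : ∀ j, y0 j = 0 ∨ y0 j = 1 := by
    intro j; simp only [hy0]; split <;> simp
  have hy0u : y0 u = 0 := by simp [hy0, huS]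
  have hy0v : y0 v = 0 := by simp [hy0, hvS]
  have hyuval : ∀ j, yu j = 0 ∨ yu j = 1 := by
    intro j
    by_cases h : j = u
    · subst h; simp [hyu, hy0u, he]
    · simp only [hyu, he, if_neg h, add_zero]; exact hy0val j
  have hyvval : ∀ j, yv j = 0 ∨ yv j = 1 := by
    intro j
    by_cases h : j = v
    · subst h; simp [hyv, hy0v, he]
    · simp only [hyv, he, if_neg h, add_zero]; exact hy0val j
  have hyuvval : ∀ j, yuv j = 0 ∨ yuv j = 1 := by
    intro j
    by_cases h : j = u
    · subst h; simp [hyuv, hy0u, he, huvne]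
    · by_cases h' : j = v
      · subst h'; simp [hyuv, hy0v, he, h]
      · simp only [hyuv, he, if_neg h, if_neg h', add_zero]; exact hy0val j
  have hsum0 : (∑ j, y0 j) = (r : ℝ) - 1 := by
    have : (∑ j, y0 j) = (S.card : ℝ) := by
      simp [hy0, Finset.sum_ite_mem]
    rw [this, hScard, Nat.cast_sub hr, Nat.cast_one]
  have hsume : ∀ w : Fin n, (∑ j, e w j) = 1 := by
    intro w; simp [he]
  have hsumu : (∑ j, yu j) = (r : ℝ) := by
    simp only [hyu, Finset.sum_add_distrib, hsum0, hsume]; ring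
  have hsumv : (∑ j, yv j) = (r : ℝ) := by
    simp only [hyv, Finset.sum_add_distrib, hsum0, hsume]; ring
  -- key pointwise identity for the quadratic terms
  have hD : ∀ j k : Fin n, (if j < k then c j k * (e u j * e v k + e v j * e u k) else 0)
      = if j = u ∧ k = v then c u v else 0 := by
    intro j k
    simp only [he]
    by_cases hju : j = u
    · subst hju
      by_cases hkv : k = v
      · subst hkv
        simp [huv, huvne, huvne.symm]
      · simp only [hkv, and_false, if_false, if_neg hkv]
        by_cases hjv : j = v
        · exact absurd hjv huvne
        · simp only [if_neg hjv]
          split <;> ring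
    · by_cases hjv : j = v
      · subst hjv
        simp only [hju, false_and, if_false, if_neg hju]
        by_cases hku : k = u
        · subst hku
          have : ¬ j < k := not_lt_of_gt huv
          simp [this]
        · simp only [if_neg hku]
          split <;> ring
      · simp only [hju, false_and, if_false, if_neg hju, if_neg hjv]
        split <;> ring
  have key : Q yuv + Q y0 = Q yu + Q yv + c u v := by
    rw [hQ, hQ, hQ, hQ]
    have h1 : (∑ j, b j * yuv j) + (∑ j, b j * y0 j)
        = (∑ j, b j * yu j) + (∑ j, b j * yv j) := by
      rw [← Finset.sum_add_distrib, ← Finset.sum_add_distrib]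
      exact Finset.sum_congr rfl fun j _ => by simp only [hyuv, hyu, hyv]; ring
    have h2 : (∑ j, ∑ k, if j < k then c j k * yuv j * yuv k else 0)
        + (∑ j, ∑ k, if j < k then c j k * y0 j * y0 k else 0)
        = (∑ j, ∑ k, if j < k then c j k * yu j * yu k else 0)
        + (∑ j, ∑ k, if j < k then c j k * yv j * yv k else 0) + c u v := by
      have hpt : ∀ j k : Fin n,
          (if j < k then c j k * yuv j * yuv k else 0)
            + (if j < k then c j k * y0 j * y0 k else 0)
          = (if j < k then c j k * yu j * yu k else 0)
            + (if j < k then c j k * yv j * yv k else 0)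
            + (if j = u ∧ k = v then c u v else 0) := by
        intro j k
        rw [← hD j k]
        by_cases h : j < k
        · simp only [if_pos h, hyuv, hyu, hyv]; ring
        · simp [h]
      have hsumite : (∑ j : Fin n, ∑ k : Fin n, if j = u ∧ k = v then c u v else 0)
          = c u v := by
        simp [ite_and, Finset.sum_ite_eq', Finset.sum_ite_eq]
      calc (∑ j, ∑ k, if j < k then c j k * yuv j * yuv k else 0)
            + (∑ j, ∑ k, if j < k then c j k * y0 j * y0 k else 0)
          = ∑ j, ∑ k, ((if j < k then c j k * yuv j * yuv k else 0)
              + (if j < k then c j k * y0 j * y0 k else 0)) := by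
            rw [← Finset.sum_add_distrib]
            exact Finset.sum_congr rfl fun j _ => by rw [← Finset.sum_add_distrib]
        _ = ∑ j, ∑ k, ((if j < k then c j k * yu j * yu k else 0)
              + (if j < k then c j k * yv j * yv k else 0)
              + (if j = u ∧ k = v then c u v else 0)) :=
            Finset.sum_congr rfl fun j _ => Finset.sum_congr rfl fun k _ => hpt j k
        _ = (∑ j, ∑ k, if j < k then c j k * yu j * yu k else 0)
            + (∑ j, ∑ k, if j < k then c j k * yv j * yv k else 0)
            + (∑ j, ∑ k, if j = u ∧ k = v then c u v else 0) := by
            simp [Finset.sum_add_distrib]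
        _ = _ := by rw [hsumite]
    linarith [h1, h2]
  have hQu : Q yu = 0 := hzero yu hyuval hsumu
  have hQv : Q yv = 0 := hzero yv hyvval hsumv
  have hQ0 : Q y0 = 0 := by
    have h0 := hnonneg y0 hy0val
    have huv' := hnonneg yuv hyuvval
    have : Q yuv + Q y0 = 0 := by rw [key, hQu, hQv, hc]; ring
    linarith
  exact ⟨y0, hy0val, Or.inl hsum0, hQ0⟩
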